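/- The map Ψ is injective on the closed ball B_d(0, 2β*), and for all p, q ∈ B_d(0, 2β*) one has γ·‖q − p‖_d ≤ ‖Ψ(q) − Ψ(p)‖_d ≤ 16√d·η*·‖q − p‖_d. -/

import Mathlib

open Metric ContinuousLinearMap
open scoped RealInnerProductSpace

/-- The continuous linear map `ℝ^D → ℝ^d` given by the `d × D` matrix `[I_d | 0_{d,D-d}]`. -/
noncomputable def projCLM (d D : ℕ) (h : d ≤ D) :
    EuclideanSpace ℝ (Fin D) →L[ℝ] EuclideanSpace ℝ (Fin d) :=
  LinearMap.toContinuousLinearMap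
    { toFun := fun x => WithLp.toLp 2 (fun i => x (Fin.castLE h i))
      map_add' := fun _ _ => rfl
      map_smul' := fun _ _ => rfl }

/-- The `D × d` matrix `U(q)` whose `j`-th column is `u(q) − x_j* = u(q) − u(q_j)`,
viewed as a continuous linear map `ℝ^d → ℝ^D`. -/
noncomputable def Umap {d D : ℕ}
    (u : EuclideanSpace ℝ (Fin d) → EuclideanSpace ℝ (Fin D))
    (qs : Fin d → EuclideanSpace ℝ (Fin d)) (q : EuclideanSpace ℝ (Fin d)) :
    EuclideanSpace ℝ (Fin d) →L[ℝ] EuclideanSpace ℝ (Fin D) :=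
  LinearMap.toContinuousLinearMap
    { toFun := fun y => ∑ ℓ : Fin d, y ℓ • (u q - u (qs ℓ))
      map_add' := by
        intro y z
        simp [PiLp.add_apply, add_smul, Finset.sum_add_distrib]
      map_smul' := by
        intro c y
        simp [PiLp.smul_apply, smul_smul, Finset.smul_sum] }

/-- The map `Ψ(q) = (‖u(q) − u(q_1)‖², …, ‖u(q) − u(q_d)‖²) ∈ ℝ^d`. -/
noncomputable def PsiMap {d D : ℕ}
    (u : EuclideanSpace ℝ (Fin d) → EuclideanSpace ℝ (Fin D))
    (qs : Fin d → EuclideanSpace ℝ (Fin d)) (q : EuclideanSpace ℝ (Fin d)) :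
    EuclideanSpace ℝ (Fin d) :=
  WithLp.toLp 2 (fun ℓ => ‖u q - u (qs ℓ)‖ ^ 2)


/-- The zero-extension map `ℝ^d → ℝ^D`. -/
noncomputable def embCLM (d D : ℕ) (h : d ≤ D) :
    EuclideanSpace ℝ (Fin d) →L[ℝ] EuclideanSpace ℝ (Fin D) :=
  LinearMap.toContinuousLinearMap
    { toFun := fun x => WithLp.toLp 2 (fun i : Fin D => if hi : (i : ℕ) < d then x ⟨i, hi⟩ else 0)
      map_add' := by
        intro x y; ext i
        by_cases hi : (i : ℕ) < d <;> simp [hi, PiLp.add_apply]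
      map_smul' := by
        intro c x; ext i
        by_cases hi : (i : ℕ) < d <;> simp [hi, PiLp.smul_apply] }

lemma sum_castLE {d D : ℕ} (h : d ≤ D) (f : Fin D → ℝ)
    (hf : ∀ i : Fin D, ¬ (i : ℕ) < d → f i = 0) :
    ∑ i : Fin D, f i = ∑ j : Fin d, f (Fin.castLE h j) := by
  classical
  have h1 : ∑ i ∈ Finset.univ.map (Fin.castLEEmb h), f i
      = ∑ j : Fin d, f (Fin.castLE h j) := by
    rw [Finset.sum_map]; rfl
  rw [← h1]
  refine (Finset.sum_subset (Finset.subset_univ _) ?_).symm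
  intro i _ hi
  refine hf i fun hlt => hi ?_
  exact Finset.mem_map.mpr ⟨⟨i, hlt⟩, Finset.mem_univ _, by ext; simp⟩

lemma embCLM_apply {d D : ℕ} (h : d ≤ D) (x : EuclideanSpace ℝ (Fin d)) (i : Fin D) :
    embCLM d D h x i = if hi : (i : ℕ) < d then x ⟨i, hi⟩ else 0 := rfl

lemma emb_eq_adjoint {d D : ℕ} (h : d ≤ D) :
    embCLM d D h = ContinuousLinearMap.adjoint (projCLM d D h) := by
  rw [ContinuousLinearMap.eq_adjoint_iff]
  intro x y
  simp only [PiLp.inner_apply, RCLike.inner_apply, conj_trivial]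
  rw [sum_castLE h (fun i => y i * embCLM d D h x i)
    (fun i hi => by simp [embCLM_apply, hi])]
  refine Finset.sum_congr rfl fun j _ => ?_
  have hj : ((Fin.castLE h j : Fin D) : ℕ) < d := by simp [j.isLt]
  simp [embCLM_apply, hj, projCLM, mul_comm]
  left; rfl

lemma embCLM_norm {d D : ℕ} (h : d ≤ D) (x : EuclideanSpace ℝ (Fin d)) :
    ‖embCLM d D h x‖ = ‖x‖ := by
  rw [EuclideanSpace.norm_eq, EuclideanSpace.norm_eq]
  congr 1
  rw [sum_castLE h (fun i => ‖embCLM d D h x i‖ ^ 2)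
    (fun i hi => by simp [embCLM_apply, hi])]
  refine Finset.sum_congr rfl fun j _ => ?_
  have hj : ((Fin.castLE h j : Fin D) : ℕ) < d := by simp [j.isLt]
  simp [embCLM_apply, hj]

lemma adjoint_lower {n : ℕ} (T : EuclideanSpace ℝ (Fin n) →L[ℝ] EuclideanSpace ℝ (Fin n))
    {γ : ℝ} (hγ : 0 < γ) (h : ∀ y, γ * ‖y‖ ≤ ‖T y‖) (v : EuclideanSpace ℝ (Fin n)) :
    γ * ‖v‖ ≤ ‖ContinuousLinearMap.adjoint T v‖ := by
  have hinj : Function.Injective (T : EuclideanSpace ℝ (Fin n) →ₗ[ℝ] EuclideanSpace ℝ (Fin n)) := by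
    intro a b hab
    have h0 : T (a - b) = 0 := by
      have : T a = T b := hab
      rw [map_sub, this, sub_self]
    have h2 := h (a - b)
    rw [h0, norm_zero] at h2
    have : ‖a - b‖ ≤ 0 := by nlinarith [norm_nonneg (a - b)]
    have : a - b = 0 := norm_le_zero_iff.mp this
    exact sub_eq_zero.mp this
  have hsurj : Function.Surjective
      (T : EuclideanSpace ℝ (Fin n) →ₗ[ℝ] EuclideanSpace ℝ (Fin n)) :=
    LinearMap.injective_iff_surjective.mp hinj
  obtain ⟨y, hy⟩ := hsurj v
  rcases eq_or_ne v 0 with rfl | hv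
  · simp
  have hvpos : 0 < ‖v‖ := norm_pos_iff.mpr hv
  have hyT : T y = v := hy
  have key : ‖v‖ ^ 2 = ⟪ContinuousLinearMap.adjoint T v, y⟫ := by
    rw [ContinuousLinearMap.adjoint_inner_left, hyT, real_inner_self_eq_norm_sq]
  have hyb : γ * ‖y‖ ≤ ‖v‖ := by rw [← hyT]; exact h y
  have h3 : ‖v‖ ^ 2 ≤ ‖ContinuousLinearMap.adjoint T v‖ * ‖y‖ := by
    rw [key]; exact real_inner_le_norm _ _
  nlinarith [norm_nonneg (ContinuousLinearMap.adjoint T v), norm_nonneg y]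


lemma norm_le_sqrt_mul {n : ℕ} (x : EuclideanSpace ℝ (Fin n)) {C : ℝ} (hC : 0 ≤ C)
    (h : ∀ i, |x i| ≤ C) : ‖x‖ ≤ Real.sqrt n * C := by
  rw [EuclideanSpace.norm_eq]
  have hsum : ∑ i, ‖x i‖ ^ 2 ≤ (n : ℝ) * C ^ 2 := by
    calc ∑ i, ‖x i‖ ^ 2 ≤ ∑ _i : Fin n, C ^ 2 := by
          refine Finset.sum_le_sum fun i _ => ?_
          have := h i
          rw [Real.norm_eq_abs]
          nlinarith [abs_nonneg (x i)]
      _ = (n : ℝ) * C ^ 2 := by simp [Finset.sum_const, nsmul_eq_mul]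
  calc Real.sqrt (∑ i, ‖x i‖ ^ 2) ≤ Real.sqrt ((n : ℝ) * C ^ 2) := Real.sqrt_le_sqrt hsum
    _ = Real.sqrt n * C := by
        rw [Real.sqrt_mul (by positivity), Real.sqrt_sq hC]

lemma Umap_apply {d D : ℕ} (u : EuclideanSpace ℝ (Fin d) → EuclideanSpace ℝ (Fin D))
    (qs : Fin d → EuclideanSpace ℝ (Fin d)) (q y : EuclideanSpace ℝ (Fin d)) :
    Umap u qs q y = ∑ ℓ : Fin d, y ℓ • (u q - u (qs ℓ)) := rfl

lemma Umap_single {d D : ℕ} (u : EuclideanSpace ℝ (Fin d) → EuclideanSpace ℝ (Fin D))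
    (qs : Fin d → EuclideanSpace ℝ (Fin d)) (q : EuclideanSpace ℝ (Fin d)) (ℓ : Fin d) :
    Umap u qs q (EuclideanSpace.single ℓ (1 : ℝ)) = u q - u (qs ℓ) := by
  rw [Umap_apply]
  rw [Finset.sum_eq_single ℓ]
  · simp [EuclideanSpace.single_apply]
  · intro j _ hj
    simp [EuclideanSpace.single_apply, hj]
  · intro hℓ
    exact absurd (Finset.mem_univ ℓ) hℓ

lemma Uadj_apply {d D : ℕ} (u : EuclideanSpace ℝ (Fin d) → EuclideanSpace ℝ (Fin D))
    (qs : Fin d → EuclideanSpace ℝ (Fin d)) (q : EuclideanSpace ℝ (Fin d))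
    (w : EuclideanSpace ℝ (Fin D)) (ℓ : Fin d) :
    (ContinuousLinearMap.adjoint (Umap u qs q) w) ℓ = ⟪u q - u (qs ℓ), w⟫ := by
  have h1 : (ContinuousLinearMap.adjoint (Umap u qs q) w) ℓ
      = ⟪EuclideanSpace.single ℓ (1 : ℝ), ContinuousLinearMap.adjoint (Umap u qs q) w⟫ := by
    rw [EuclideanSpace.inner_single_left]; simp
  rw [h1, ContinuousLinearMap.adjoint_inner_right, Umap_single]

lemma psi_diff_apply {d D : ℕ} (u : EuclideanSpace ℝ (Fin d) → EuclideanSpace ℝ (Fin D))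
    (qs : Fin d → EuclideanSpace ℝ (Fin d)) (p q : EuclideanSpace ℝ (Fin d)) (ℓ : Fin d) :
    (PsiMap u qs q - PsiMap u qs p) ℓ
      = ⟪u q - u p, (u q - u (qs ℓ)) + (u p - u (qs ℓ))⟫ := by
  have h0 : (PsiMap u qs q - PsiMap u qs p) ℓ
      = ‖u q - u (qs ℓ)‖ ^ 2 - ‖u p - u (qs ℓ)‖ ^ 2 := by simp [PsiMap]
  rw [h0]
  set a := u q - u (qs ℓ) with ha
  set b := u p - u (qs ℓ) with hb
  have hab : u q - u p = a - b := by rw [ha, hb]; abel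
  rw [hab, inner_sub_left, inner_add_right, inner_add_right,
    real_inner_self_eq_norm_sq, real_inner_self_eq_norm_sq, real_inner_comm b a]
  ring

lemma mvt_est {d D : ℕ} (u : EuclideanSpace ℝ (Fin d) → EuclideanSpace ℝ (Fin D))
    {δ κ : ℝ} (hκ : 0 ≤ κ)
    (J : EuclideanSpace ℝ (Fin d) → (EuclideanSpace ℝ (Fin D) →L[ℝ] EuclideanSpace ℝ (Fin d)))
    (hu : ∀ q ∈ closedBall (0 : EuclideanSpace ℝ (Fin d)) δ,
      HasFDerivWithinAt u (ContinuousLinearMap.adjoint (J q)) (closedBall 0 δ) q)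
    (hJlip : ∀ q ∈ closedBall (0 : EuclideanSpace ℝ (Fin d)) δ, ‖J q - J 0‖ ≤ κ * ‖q‖)
    {ρ : ℝ} (hρδ : ρ ≤ δ) {p q : EuclideanSpace ℝ (Fin d)}
    (hp : p ∈ closedBall (0 : EuclideanSpace ℝ (Fin d)) ρ)
    (hq : q ∈ closedBall (0 : EuclideanSpace ℝ (Fin d)) ρ) :
    ‖u q - u p - (ContinuousLinearMap.adjoint (J 0)) (q - p)‖ ≤ κ * ρ * ‖q - p‖ := by
  set A := ContinuousLinearMap.adjoint (J 0) with hA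
  have hsub : closedBall (0 : EuclideanSpace ℝ (Fin d)) ρ ⊆ closedBall 0 δ :=
    closedBall_subset_closedBall hρδ
  have hder : ∀ x ∈ closedBall (0 : EuclideanSpace ℝ (Fin d)) ρ,
      HasFDerivWithinAt (fun y => u y - A y)
        (ContinuousLinearMap.adjoint (J x) - A) (closedBall 0 ρ) x := by
    intro x hx
    exact ((hu x (hsub hx)).mono hsub).sub (A.hasFDerivWithinAt)
  have hbound : ∀ x ∈ closedBall (0 : EuclideanSpace ℝ (Fin d)) ρ,
      ‖ContinuousLinearMap.adjoint (J x) - A‖ ≤ κ * ρ := by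
    intro x hx
    have h1 : ContinuousLinearMap.adjoint (J x) - A
        = ContinuousLinearMap.adjoint (J x - J 0) := (map_sub ContinuousLinearMap.adjoint _ _).symm
    rw [h1, LinearIsometryEquiv.norm_map]
    have h2 := hJlip x (hsub hx)
    have h3 : ‖x‖ ≤ ρ := mem_closedBall_zero_iff.mp hx
    nlinarith
  have hmvt := (convex_closedBall (0 : EuclideanSpace ℝ (Fin d)) ρ
    ).norm_image_sub_le_of_norm_hasFDerivWithin_le hder hbound hp hq
  have heq : (u q - A q) - (u p - A p) = u q - u p - A (q - p) := by
    rw [map_sub]; abel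
  rw [heq] at hmvt
  exact hmvt

set_option maxHeartbeats 4000000 in
/-- with `β* = (1/2)·min(1/(2κ), δ*, γ/(8√d))` and `η* = min(δ*, 1/(2κ))`,
`Ψ` is injective on `B_d(0, 2β*)` and for all `p, q ∈ B_d(0, 2β*)`,
`γ‖q − p‖ ≤ ‖Ψ(q) − Ψ(p)‖ ≤ 16√d·η*·‖q − p‖`. -/
theorem statement7 (d D : ℕ) (hd : 1 ≤ d) (hdD : d ≤ D)
    (u : EuclideanSpace ℝ (Fin d) → EuclideanSpace ℝ (Fin D))
    (δ κ : ℝ) (hδ : 0 < δ) (hκ : 0 < κ)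
    (J : EuclideanSpace ℝ (Fin d) → (EuclideanSpace ℝ (Fin D) →L[ℝ] EuclideanSpace ℝ (Fin d)))
    (hu : ∀ q ∈ closedBall (0 : EuclideanSpace ℝ (Fin d)) δ,
      HasFDerivWithinAt u (ContinuousLinearMap.adjoint (J q)) (closedBall 0 δ) q)
    (hJcont : ContinuousOn J (closedBall 0 δ))
    (hJ0 : J 0 = projCLM d D hdD)
    (hJlip : ∀ q ∈ closedBall (0 : EuclideanSpace ℝ (Fin d)) δ, ‖J q - J 0‖ ≤ κ * ‖q‖)
    (qs : Fin d → EuclideanSpace ℝ (Fin d))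
    (hqs : ∀ ℓ, qs ℓ ∈ closedBall (0 : EuclideanSpace ℝ (Fin d)) (min δ (1 / (2 * κ))))
    (γ : ℝ) (hγpos : 0 < γ)
    (hγ : ∀ y : EuclideanSpace ℝ (Fin d), ‖y‖ = 1 → γ ≤ ‖(J 0) ((Umap u qs 0) y)‖) :
    Set.InjOn (PsiMap u qs)
      (closedBall (0 : EuclideanSpace ℝ (Fin d))
        (2 * ((1 / 2) * min (1 / (2 * κ)) (min δ (γ / (8 * Real.sqrt d)))))) ∧
    ∀ p ∈ closedBall (0 : EuclideanSpace ℝ (Fin d))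
        (2 * ((1 / 2) * min (1 / (2 * κ)) (min δ (γ / (8 * Real.sqrt d))))),
      ∀ q ∈ closedBall (0 : EuclideanSpace ℝ (Fin d))
          (2 * ((1 / 2) * min (1 / (2 * κ)) (min δ (γ / (8 * Real.sqrt d))))),
        γ * ‖q - p‖ ≤ ‖PsiMap u qs q - PsiMap u qs p‖ ∧
        ‖PsiMap u qs q - PsiMap u qs p‖ ≤
          16 * Real.sqrt d * min δ (1 / (2 * κ)) * ‖q - p‖ := by
  classical
  have hκ0 : (0:ℝ) ≤ κ := hκ.le
  have hd1 : (1:ℝ) ≤ Real.sqrt d := by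
    rw [show (1:ℝ) = Real.sqrt 1 from Real.sqrt_one.symm]
    exact Real.sqrt_le_sqrt (by exact_mod_cast hd)
  have hsd : (0:ℝ) < Real.sqrt d := lt_of_lt_of_le one_pos hd1
  set η := min δ (1 / (2 * κ)) with hηdef
  set r := 2 * ((1 / 2) * min (1 / (2 * κ)) (min δ (γ / (8 * Real.sqrt d)))) with hrdef
  have hrval : r = min (1 / (2 * κ)) (min δ (γ / (8 * Real.sqrt d))) := by rw [hrdef]; ring
  have hrκ : r ≤ 1 / (2 * κ) := hrval ▸ min_le_left _ _
  have hrδ : r ≤ δ := hrval ▸ le_trans (min_le_right _ _) (min_le_left _ _)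
  have hrγ : r ≤ γ / (8 * Real.sqrt d) :=
    hrval ▸ le_trans (min_le_right _ _) (min_le_right _ _)
  have hr0 : 0 < r := by
    rw [hrval]; exact lt_min (by positivity) (lt_min hδ (by positivity))
  have hrη : r ≤ η := le_min hrδ hrκ
  have hη0 : 0 < η := lt_min hδ (by positivity)
  have hηδ : η ≤ δ := min_le_left _ _
  have hκη : κ * η ≤ 1 / 2 := by
    have h1 : η ≤ 1 / (2 * κ) := min_le_right _ _
    have h2 := mul_le_mul_of_nonneg_left h1 hκ0
    calc κ * η ≤ κ * (1 / (2 * κ)) := h2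
      _ = 1 / 2 := by field_simp
  have hκr : κ * r ≤ 1 / 2 := by
    have := mul_le_mul_of_nonneg_left hrη hκ0
    linarith
  have hsdr : Real.sqrt d * r ≤ γ / 8 := by
    have h2 := mul_le_mul_of_nonneg_left hrγ hsd.le
    calc Real.sqrt d * r ≤ Real.sqrt d * (γ / (8 * Real.sqrt d)) := h2
      _ = γ / 8 := by field_simp
  set A := ContinuousLinearMap.adjoint (J 0) with hAdef
  have hAnorm : ∀ z, ‖A z‖ = ‖z‖ := by
    intro z
    rw [hAdef, hJ0, ← emb_eq_adjoint, embCLM_norm]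
  -- gamma bound for all vectors
  have hγall : ∀ y, γ * ‖y‖ ≤ ‖((J 0).comp (Umap u qs 0)) y‖ := by
    intro y
    rcases eq_or_ne y 0 with rfl | hy
    · simp
    · have hn : (0:ℝ) < ‖y‖ := norm_pos_iff.mpr hy
      have h1 := hγ (‖y‖⁻¹ • y)
        (by rw [norm_smul, norm_inv, norm_norm]; field_simp)
      have h2 : (J 0) ((Umap u qs 0) (‖y‖⁻¹ • y)) = ‖y‖⁻¹ • (J 0) ((Umap u qs 0) y) := by
        rw [map_smul, map_smul]
      rw [h2, norm_smul, norm_inv, norm_norm] at h1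
      have h3 := mul_le_mul_of_nonneg_left h1 hn.le
      have h4 : ((J 0).comp (Umap u qs 0)) y = (J 0) ((Umap u qs 0) y) := rfl
      rw [h4]
      calc γ * ‖y‖ = ‖y‖ * γ := by ring
        _ ≤ ‖y‖ * (‖y‖⁻¹ * ‖(J 0) ((Umap u qs 0) y)‖) := h3
        _ = ‖(J 0) ((Umap u qs 0) y)‖ := by field_simp
  have hS : ∀ z, γ * ‖z‖ ≤ ‖ContinuousLinearMap.adjoint ((J 0).comp (Umap u qs 0)) z‖ :=
    adjoint_lower _ hγpos hγall
  have hTA : ∀ z, ContinuousLinearMap.adjoint (Umap u qs 0) (A z)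
      = ContinuousLinearMap.adjoint ((J 0).comp (Umap u qs 0)) z := by
    intro z
    rw [ContinuousLinearMap.adjoint_comp]
    rfl
  have h0η : (0 : EuclideanSpace ℝ (Fin d)) ∈ closedBall (0 : EuclideanSpace ℝ (Fin d)) η :=
    mem_closedBall_self hη0.le
  -- Lipschitz-type bound on the η-ball
  have lip : ∀ x ∈ closedBall (0 : EuclideanSpace ℝ (Fin d)) η,
      ∀ y ∈ closedBall (0 : EuclideanSpace ℝ (Fin d)) η,
      ‖u y - u x‖ ≤ (3 / 2) * ‖y - x‖ := by
    intro x hx y hy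
    have h1 := mvt_est u hκ0 J hu hJlip hηδ hx hy
    have h2 : κ * η * ‖y - x‖ ≤ (1 / 2) * ‖y - x‖ :=
      mul_le_mul_of_nonneg_right hκη (norm_nonneg _)
    calc ‖u y - u x‖ = ‖(u y - u x - A (y - x)) + A (y - x)‖ := by congr 1; abel
      _ ≤ ‖u y - u x - A (y - x)‖ + ‖A (y - x)‖ := norm_add_le _ _
      _ ≤ κ * η * ‖y - x‖ + ‖y - x‖ := by rw [hAnorm]; linarith
      _ ≤ (3 / 2) * ‖y - x‖ := by linarith
  -- column bounds
  have hcol : ∀ ℓ, ‖u 0 - u (qs ℓ)‖ ≤ (3 / 2) * η := by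
    intro ℓ
    have h1 := lip (qs ℓ) (hqs ℓ) 0 h0η
    have h2 : ‖(0 : EuclideanSpace ℝ (Fin d)) - qs ℓ‖ = ‖qs ℓ‖ := by simp
    have h3 : ‖qs ℓ‖ ≤ η := mem_closedBall_zero_iff.mp (hqs ℓ)
    rw [h2] at h1
    linarith
  have hTcomp : ∀ w : EuclideanSpace ℝ (Fin D), ∀ ℓ : Fin d,
      |(ContinuousLinearMap.adjoint (Umap u qs 0) w) ℓ| ≤ (3 / 2) * η * ‖w‖ := by
    intro w ℓ
    rw [Uadj_apply]
    calc |⟪u 0 - u (qs ℓ), w⟫| ≤ ‖u 0 - u (qs ℓ)‖ * ‖w‖ := abs_real_inner_le_norm _ _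
      _ ≤ (3 / 2) * η * ‖w‖ := mul_le_mul_of_nonneg_right (hcol ℓ) (norm_nonneg _)
  have hTnorm : ∀ w : EuclideanSpace ℝ (Fin D),
      ‖ContinuousLinearMap.adjoint (Umap u qs 0) w‖ ≤ Real.sqrt d * ((3 / 2) * η * ‖w‖) :=
    fun w => norm_le_sqrt_mul _ (by positivity) (hTcomp w)
  -- the core two-sided estimate
  have core : ∀ p ∈ closedBall (0 : EuclideanSpace ℝ (Fin d)) r,
      ∀ q ∈ closedBall (0 : EuclideanSpace ℝ (Fin d)) r,
      γ * ‖q - p‖ ≤ ‖PsiMap u qs q - PsiMap u qs p‖ ∧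
      ‖PsiMap u qs q - PsiMap u qs p‖ ≤ 16 * Real.sqrt d * η * ‖q - p‖ := by
    intro p hp q hq
    have hpη : p ∈ closedBall (0 : EuclideanSpace ℝ (Fin d)) η :=
      closedBall_subset_closedBall hrη hp
    have hqη : q ∈ closedBall (0 : EuclideanSpace ℝ (Fin d)) η :=
      closedBall_subset_closedBall hrη hq
    have hpr : ‖p‖ ≤ r := mem_closedBall_zero_iff.mp hp
    have hqr : ‖q‖ ≤ r := mem_closedBall_zero_iff.mp hq
    have herr : ‖u q - u p - A (q - p)‖ ≤ κ * r * ‖q - p‖ :=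
      mvt_est u hκ0 J hu hJlip hrδ hp hq
    have hwle : ‖u q - u p‖ ≤ (3 / 2) * ‖q - p‖ := lip p hpη q hqη
    have hqcol : ∀ ℓ, ‖u q - u (qs ℓ)‖ ≤ 3 * η := by
      intro ℓ
      have h1 := lip (qs ℓ) (hqs ℓ) q hqη
      have h3 : ‖q - qs ℓ‖ ≤ ‖q‖ + ‖qs ℓ‖ := norm_sub_le _ _
      have h4 : ‖qs ℓ‖ ≤ η := mem_closedBall_zero_iff.mp (hqs ℓ)
      linarith
    have hpcol : ∀ ℓ, ‖u p - u (qs ℓ)‖ ≤ 3 * η := by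
      intro ℓ
      have h1 := lip (qs ℓ) (hqs ℓ) p hpη
      have h3 : ‖p - qs ℓ‖ ≤ ‖p‖ + ‖qs ℓ‖ := norm_sub_le _ _
      have h4 : ‖qs ℓ‖ ≤ η := mem_closedBall_zero_iff.mp (hqs ℓ)
      linarith
    have hq0 : ‖u q - u 0‖ ≤ (3 / 2) * r := by
      have h1 := lip 0 h0η q hqη
      have h2 : ‖q - (0 : EuclideanSpace ℝ (Fin d))‖ = ‖q‖ := by simp
      rw [h2] at h1
      linarith
    have hp0 : ‖u p - u 0‖ ≤ (3 / 2) * r := by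
      have h1 := lip 0 h0η p hpη
      have h2 : ‖p - (0 : EuclideanSpace ℝ (Fin d))‖ = ‖p‖ := by simp
      rw [h2] at h1
      linarith
    -- upper bound
    have hup : ‖PsiMap u qs q - PsiMap u qs p‖ ≤ Real.sqrt d * (9 * η * ‖q - p‖) := by
      refine norm_le_sqrt_mul _ (by positivity) fun ℓ => ?_
      rw [psi_diff_apply]
      have h1 := abs_real_inner_le_norm (u q - u p) ((u q - u (qs ℓ)) + (u p - u (qs ℓ)))
      have h2 : ‖(u q - u (qs ℓ)) + (u p - u (qs ℓ))‖ ≤ 6 * η :=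
        le_trans (norm_add_le _ _) (by linarith [hqcol ℓ, hpcol ℓ])
      calc |⟪u q - u p, (u q - u (qs ℓ)) + (u p - u (qs ℓ))⟫|
          ≤ ‖u q - u p‖ * ‖(u q - u (qs ℓ)) + (u p - u (qs ℓ))‖ := h1
        _ ≤ ((3 / 2) * ‖q - p‖) * (6 * η) :=
            mul_le_mul hwle h2 (norm_nonneg _) (by positivity)
        _ = 9 * η * ‖q - p‖ := by ring
    -- decomposition identity
    obtain ⟨Evec, hEvec⟩ : ∃ Evec : EuclideanSpace ℝ (Fin d),
        ∀ ℓ : Fin d, Evec ℓ = ⟪u q - u p, (u q - u 0) + (u p - u 0)⟫ :=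
      ⟨WithLp.toLp 2 (fun _ => ⟪u q - u p, (u q - u 0) + (u p - u 0)⟫ : Fin d → ℝ), fun _ => rfl⟩
    have hiden : PsiMap u qs q - PsiMap u qs p
        = (2:ℝ) • (ContinuousLinearMap.adjoint (Umap u qs 0) (u q - u p)) + Evec := by
      ext ℓ
      have hR : ((2:ℝ) • (ContinuousLinearMap.adjoint (Umap u qs 0) (u q - u p)) + Evec) ℓ
          = 2 * (ContinuousLinearMap.adjoint (Umap u qs 0) (u q - u p)) ℓ + Evec ℓ := rfl
      rw [hR, hEvec ℓ, psi_diff_apply, Uadj_apply]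
      have hsplit : (u q - u (qs ℓ)) + (u p - u (qs ℓ))
          = (2:ℝ) • (u 0 - u (qs ℓ)) + ((u q - u 0) + (u p - u 0)) := by
        module
      rw [hsplit, inner_add_right, real_inner_smul_right,
        real_inner_comm (u 0 - u (qs ℓ)) (u q - u p)]
    -- lower bound pieces
    have hTsplit : ContinuousLinearMap.adjoint ((J 0).comp (Umap u qs 0)) (q - p)
        = ContinuousLinearMap.adjoint (Umap u qs 0) (u q - u p)
          - ContinuousLinearMap.adjoint (Umap u qs 0) ((u q - u p) - A (q - p)) := by
      rw [← hTA, ← map_sub]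
      congr 1
      abel
    have hlow1 : γ * ‖q - p‖ - Real.sqrt d * ((3 / 2) * η * (κ * r * ‖q - p‖))
        ≤ ‖ContinuousLinearMap.adjoint (Umap u qs 0) (u q - u p)‖ := by
      have h1 := hS (q - p)
      have h2 := hTnorm ((u q - u p) - A (q - p))
      have h3 : Real.sqrt d * ((3 / 2) * η * ‖(u q - u p) - A (q - p)‖)
          ≤ Real.sqrt d * ((3 / 2) * η * (κ * r * ‖q - p‖)) := by
        gcongr
      have h4 : ‖ContinuousLinearMap.adjoint ((J 0).comp (Umap u qs 0)) (q - p)‖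
          ≤ ‖ContinuousLinearMap.adjoint (Umap u qs 0) (u q - u p)‖
            + ‖ContinuousLinearMap.adjoint (Umap u qs 0) ((u q - u p) - A (q - p))‖ := by
        rw [hTsplit]
        exact norm_sub_le _ _
      linarith
    have hc : |⟪u q - u p, (u q - u 0) + (u p - u 0)⟫| ≤ (9 / 2) * r * ‖q - p‖ := by
      have h1 := abs_real_inner_le_norm (u q - u p) ((u q - u 0) + (u p - u 0))
      have h2 : ‖(u q - u 0) + (u p - u 0)‖ ≤ 3 * r :=
        le_trans (norm_add_le _ _) (by linarith)
      calc |⟪u q - u p, (u q - u 0) + (u p - u 0)⟫|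
          ≤ ‖u q - u p‖ * ‖(u q - u 0) + (u p - u 0)‖ := h1
        _ ≤ ((3 / 2) * ‖q - p‖) * (3 * r) :=
            mul_le_mul hwle h2 (norm_nonneg _) (by positivity)
        _ = (9 / 2) * r * ‖q - p‖ := by ring
    have hEnorm : ‖Evec‖ ≤ Real.sqrt d * ((9 / 2) * r * ‖q - p‖) :=
      norm_le_sqrt_mul _ (by positivity) fun ℓ => by rw [hEvec ℓ]; exact hc
    have hlow : γ * ‖q - p‖ ≤ ‖PsiMap u qs q - PsiMap u qs p‖ := by
      have h5 : ‖(2:ℝ) • (ContinuousLinearMap.adjoint (Umap u qs 0) (u q - u p))‖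
          - ‖Evec‖ ≤ ‖PsiMap u qs q - PsiMap u qs p‖ := by
        rw [hiden]
        have h7 := norm_sub_le
          ((2:ℝ) • (ContinuousLinearMap.adjoint (Umap u qs 0) (u q - u p)) + Evec) Evec
        have h8 : ((2:ℝ) • (ContinuousLinearMap.adjoint (Umap u qs 0) (u q - u p)) + Evec)
            - Evec = (2:ℝ) • (ContinuousLinearMap.adjoint (Umap u qs 0) (u q - u p)) := by
          abel
        rw [h8] at h7
        linarith
      have h6 : ‖(2:ℝ) • (ContinuousLinearMap.adjoint (Umap u qs 0) (u q - u p))‖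
          = 2 * ‖ContinuousLinearMap.adjoint (Umap u qs 0) (u q - u p)‖ := by
        rw [norm_smul]
        simp
      have hm : (κ * η) * (Real.sqrt d * r) ≤ (1 / 2) * (γ / 8) :=
        mul_le_mul hκη hsdr (by positivity) (by norm_num)
      linarith [mul_le_mul_of_nonneg_right hm (norm_nonneg (q - p)),
        mul_le_mul_of_nonneg_right hsdr (norm_nonneg (q - p)),
        mul_nonneg hγpos.le (norm_nonneg (q - p))]
    refine ⟨hlow, ?_⟩
    have h9 : Real.sqrt d * (9 * η * ‖q - p‖) ≤ 16 * Real.sqrt d * η * ‖q - p‖ := by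
      linarith [mul_nonneg (mul_nonneg hsd.le hη0.le) (norm_nonneg (q - p))]
    linarith
  constructor
  · intro p hp q hq hpq
    have h1 := (core p hp q hq).1
    rw [hpq, sub_self, norm_zero] at h1
    have h2 : ‖q - p‖ = 0 := le_antisymm (by nlinarith) (norm_nonneg _)
    exact (sub_eq_zero.mp (norm_eq_zero.mp h2)).symm
  · exact core
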